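/- arXiv:2107.05205 — 3 statements merged into one kernel-verified Lean document; each statement's English description precedes it below -/
import Mathlib

section
/- Let Φ be a finite root system with Weyl group W₀ acting on V = Y ⊗ ℝ, let σ be a finite-order automorphism of the root datum, and fix η ∈ Y. Choose M ≥ 2 with M·|⟨α, η⟩| > 2A for all α ∈ Φ with ⟨α, η⟩ ≠ 0, where A = max{|⟨α, η⟩| : α ∈ Φ}. For w̃ = t^μ w with μ a W₀-conjugate of η, define ν♭ = Σ_{i=0}^{N−1} p(w̃σ)^i(μ)/M^i, where N is the order of p(w̃σ) in W₀ ⋊ ⟨σ⟩. If α ∈ Φ, n ≥ 0, ⟨α, p(w̃σ)^n(μ)⟩ ≠ 0, and ⟨α, p(w̃σ)^i(μ)⟩ = 0 for 0 ≤ i ≤ n−1, then ⟨α, ν♭⟩ and ⟨α, p(w̃σ)^n(μ)⟩ have the same sign. -/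
/-- Lemma: with `ν♭ = Σ_{i<N} p(w̃σ)^i(μ)/M^i` (M large), if `⟨α, p(w̃σ)^n(μ)⟩ ≠ 0` and
`⟨α, p(w̃σ)^i(μ)⟩ = 0` for `0 ≤ i < n`, then `⟨α, ν♭⟩` and `⟨α, p(w̃σ)^n(μ)⟩` have the
same sign.  Here `φ` plays the role of the finite-order linear automorphism `p(w̃σ)` of
`V = Y ⊗ ℝ`, acting compatibly on the (finite) set of roots `Phi` via `permφ`, and
`μ = ψ(η)` is a conjugate of `η` under an element `ψ` of the group generated by `W₀` and
`σ` (also acting compatibly on the roots). -/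
theorem stmt_3 {V Phi : Type*} [AddCommGroup V] [Module ℝ V]
    (pair : Phi → V → ℝ) (hlin : ∀ α, IsLinearMap ℝ (pair α))
    (η : V) (A M : ℝ)
    (hA : ∀ α : Phi, |pair α η| ≤ A)
    (hM2 : 2 ≤ M)
    (hM : ∀ α : Phi, pair α η ≠ 0 → 2 * A < M * |pair α η|)
    (φ : V ≃ₗ[ℝ] V) (permφ : Equiv.Perm Phi)
    (hφ : ∀ (α : Phi) (v : V), pair (permφ α) (φ v) = pair α v)
    (N : ℕ) (hN : 0 < N) (hord : φ ^ N = 1)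
    (ψ : V ≃ₗ[ℝ] V) (permψ : Equiv.Perm Phi)
    (hψ : ∀ (α : Phi) (v : V), pair (permψ α) (ψ v) = pair α v)
    (μ : V) (hμ : μ = ψ η)
    (α : Phi) (n : ℕ)
    (hn1 : pair α ((φ ^ n) μ) ≠ 0)
    (hn2 : ∀ i < n, pair α ((φ ^ i) μ) = 0) :
    0 < pair α (∑ i ∈ Finset.range N, (1 / M ^ i) • (φ ^ i) μ) * pair α ((φ ^ n) μ) := by
  have hM0 : (0:ℝ) < M := by linarith
  set c : ℕ → ℝ := fun i => pair α ((φ ^ i) μ) with hc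
  -- every value c i is a pairing of some root with η
  have aux : ∀ (i : ℕ) (β : Phi) (v : V), pair ((permφ ^ i) β) ((φ ^ i) v) = pair β v := by
    intro i
    induction i with
    | zero => intro β v; simp
    | succ k ih =>
      intro β v
      have h1 : (permφ ^ (k+1)) β = permφ ((permφ ^ k) β) := by
        rw [pow_succ']; rfl
      have h2 : (φ ^ (k+1)) v = φ ((φ ^ k) v) := by
        rw [pow_succ']; rfl
      rw [h1, h2, hφ, ih]
  have key : ∀ i : ℕ, ∃ β : Phi, c i = pair β η := by
    intro i
    refine ⟨permψ.symm ((permφ⁻¹ ^ i) α), ?_⟩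
    have h1 : (permφ ^ i) ((permφ⁻¹ ^ i) α) = α := by
      have : (permφ ^ i) ((permφ⁻¹ ^ i) α) = ((permφ ^ i) * (permφ⁻¹ ^ i)) α := rfl
      rw [this, inv_pow]
      simp
    have h2 : c i = pair ((permφ⁻¹ ^ i) α) μ := by
      conv_lhs => rw [hc]; rw [show α = (permφ ^ i) ((permφ⁻¹ ^ i) α) from h1.symm]
      exact aux i _ μ
    have h3 : pair ((permφ⁻¹ ^ i) α) μ = pair (permψ.symm ((permφ⁻¹ ^ i) α)) η := by
      rw [hμ]
      conv_lhs => rw [show (permφ⁻¹ ^ i) α = permψ (permψ.symm ((permφ⁻¹ ^ i) α)) from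
        (permψ.apply_symm_apply _).symm]
      exact hψ _ _
    rw [h2, h3]
  have hbound : ∀ i, |c i| ≤ A := by
    intro i; obtain ⟨β, hβ⟩ := key i; rw [hβ]; exact hA β
  have hbig : ∀ i, c i ≠ 0 → 2 * A < M * |c i| := by
    intro i hi; obtain ⟨β, hβ⟩ := key i; rw [hβ] at hi ⊢; exact hM β hi
  have hA0 : (0:ℝ) ≤ A := le_trans (abs_nonneg _) (hA α)
  -- n < N
  have hper : ∀ i : ℕ, c i = c (i % N) := by
    intro i
    have : φ ^ i = φ ^ (i % N) := by
      conv_lhs => rw [← Nat.div_add_mod i N]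
      rw [pow_add, pow_mul, hord, one_pow, one_mul]
    simp only [hc, this]
  have hnN : n < N := by
    by_contra h
    push_neg at h
    have h1 : n % N < n := lt_of_lt_of_le (Nat.mod_lt _ hN) h
    exact hn1 ((hper n).trans (hn2 _ h1))
  -- compute the pairing with the sum
  have hS : pair α (∑ i ∈ Finset.range N, (1 / M ^ i) • (φ ^ i) μ)
      = ∑ i ∈ Finset.range N, (1 / M ^ i) * c i := by
    have h0 : pair α = (IsLinearMap.mk' (pair α) (hlin α) : V →ₗ[ℝ] ℝ) := rfl
    rw [h0, map_sum]
    refine Finset.sum_congr rfl fun i _ => ?_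
    rw [map_smul, smul_eq_mul]; rfl
  rw [hS]
  -- split the sum
  have hsplit : ∑ i ∈ Finset.range N, (1 / M ^ i) * c i
      = (1 / M ^ n) * c n + ∑ i ∈ Finset.Ico (n+1) N, (1 / M ^ i) * c i := by
    rw [Finset.range_eq_Ico, ← Finset.sum_Ico_consecutive _ (Nat.zero_le (n+1)) hnN,
      ← Finset.range_eq_Ico, Finset.sum_range_succ]
    have hz : ∑ i ∈ Finset.range n, (1 / M ^ i) * c i = 0 :=
      Finset.sum_eq_zero fun i hi => by
        have h := hn2 i (Finset.mem_range.mp hi)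
        simp only [hc, h, mul_zero]
    rw [hz]; ring
  rw [hsplit]
  set T := ∑ i ∈ Finset.Ico (n+1) N, (1 / M ^ i) * c i with hT
  -- bound the tail
  have hx0 : (0:ℝ) < 1 / M := by positivity
  have hx1 : 1 / M ≤ 1 / 2 := by
    apply one_div_le_one_div_of_le <;> linarith
  have hgeom : ∑ i ∈ Finset.Ico (n+1) N, (1 / M) ^ i ≤ 2 * (1 / M) ^ (n+1) := by
    have hne : (1 / M : ℝ) ≠ 1 := by linarith
    rw [geom_sum_Ico hne (by omega : n + 1 ≤ N)]
    have hpow : (0:ℝ) ≤ (1 / M) ^ N := by positivity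
    have hpow2 : (0:ℝ) ≤ (1 / M) ^ (n+1) := by positivity
    rw [div_le_iff_of_neg (by linarith : (1 / M : ℝ) - 1 < 0)]
    nlinarith [pow_nonneg hx0.le (n+1)]
  have hTb : |T| ≤ 2 * A * (1 / M) ^ (n+1) := by
    calc |T| ≤ ∑ i ∈ Finset.Ico (n+1) N, |(1 / M ^ i) * c i| := Finset.abs_sum_le_sum_abs _ _
      _ ≤ ∑ i ∈ Finset.Ico (n+1) N, (1 / M) ^ i * A := by
          refine Finset.sum_le_sum fun i _ => ?_
          rw [abs_mul, abs_of_pos (by positivity : (0:ℝ) < 1 / M ^ i), one_div, ← inv_pow,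
            ← one_div]
          exact mul_le_mul_of_nonneg_left (hbound i) (by positivity)
      _ = (∑ i ∈ Finset.Ico (n+1) N, (1 / M) ^ i) * A := by rw [Finset.sum_mul]
      _ ≤ 2 * (1 / M) ^ (n+1) * A := mul_le_mul_of_nonneg_right hgeom hA0
      _ = 2 * A * (1 / M) ^ (n+1) := by ring
  -- finish
  have hcn : c n ≠ 0 := hn1
  have hcn0 : 0 < |c n| := abs_pos.mpr hcn
  have hbigc := hbig n hcn
  have hPn : (0:ℝ) < M ^ n := by positivity
  have hkey : |T| * |c n| < (1 / M ^ n) * (c n * c n) := by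
    have h1 : |T| * |c n| ≤ 2 * A * (1 / M) ^ (n+1) * |c n| :=
      mul_le_mul_of_nonneg_right hTb (abs_nonneg _)
    have h2 : (1 / M ^ n) * (c n * c n) = (1 / M) ^ n * (|c n| * |c n|) := by
      rw [abs_mul_abs_self]
      rw [one_div, ← inv_pow, ← one_div]
    rw [h2]
    have h3 : 2 * A * (1 / M) ^ (n+1) * |c n| < (1 / M) ^ n * (|c n| * |c n|) := by
      have hxn : (0:ℝ) < (1 / M) ^ n := by positivity
      have : (1 / M) ^ (n+1) = (1 / M) ^ n * (1 / M) := by rw [pow_succ]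
      rw [this]
      have h4 : 2 * A * (1 / M) < |c n| := by
        rw [show 2 * A * (1 / M) = 2 * A / M by ring, div_lt_iff₀ hM0]
        nlinarith
      nlinarith [mul_lt_mul_of_pos_right (mul_lt_mul_of_pos_left h4 hxn) hcn0]
    linarith
  have hTc : T * c n ≥ -(|T| * |c n|) := by
    have := neg_abs_le (T * c n)
    rw [abs_mul] at this
    linarith
  nlinarith [hkey, hTc]
end

section
/- With ν♭ defined as above for w̃ = t^μ w (μ a W₀-conjugate of η), we have ⟨α, ν♭⟩ = 0 if and only if ⟨α, p(w̃σ)^i(μ)⟩ = 0 for all i ∈ ℤ. -/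
lemma geom_le_two {r : ℝ} (h0 : 0 ≤ r) (h : r ≤ 1/2) :
    ∀ K : ℕ, ∑ j ∈ Finset.range K, r ^ j ≤ 2 := by
  intro K
  induction K with
  | zero => simp
  | succ n ih =>
      rw [Finset.sum_range_succ']
      have h1 : ∑ j ∈ Finset.range n, r ^ (j + 1) = r * ∑ j ∈ Finset.range n, r ^ j := by
        rw [Finset.mul_sum]; congr 1; funext; ring
      rw [h1]
      have : r * ∑ j ∈ Finset.range n, r ^ j ≤ (1/2) * 2 :=
        mul_le_mul h ih (Finset.sum_nonneg fun j _ => pow_nonneg h0 j) (by linarith)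
      simp only [pow_zero]
      linarith

lemma key {A M : ℝ} (hM2 : 2 ≤ M) :
    ∀ (K : ℕ) (g : ℕ → ℝ), (∀ j, |g j| ≤ A) → (∀ j, g j ≠ 0 → 2 * A < M * |g j|) →
      ∑ j ∈ Finset.range K, (1/M) ^ j * g j = 0 → ∀ j < K, g j = 0 := by
  intro K
  induction K with
  | zero => intro g _ _ _ j hj; omega
  | succ n ih =>
      intro g hA hM hsum j hj
      have hM0 : (0:ℝ) < M := by linarith
      have hr0 : (0:ℝ) ≤ 1/M := by positivity
      have hr : (1:ℝ)/M ≤ 1/2 := by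
        rw [div_le_div_iff₀ hM0 (by norm_num)]; linarith
      have hA0 : 0 ≤ A := le_trans (abs_nonneg _) (hA 0)
      rw [Finset.sum_range_succ'] at hsum
      set S := ∑ j ∈ Finset.range n, (1/M) ^ j * g (j + 1) with hS
      have h1 : ∑ j ∈ Finset.range n, (1/M) ^ (j + 1) * g (j + 1) = (1/M) * S := by
        rw [hS, Finset.mul_sum]; congr 1; funext; ring
      rw [h1] at hsum
      simp only [pow_zero, one_mul] at hsum
      have hSb : |S| ≤ 2 * A := by
        calc |S| ≤ ∑ j ∈ Finset.range n, |(1/M) ^ j * g (j + 1)| :=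
              Finset.abs_sum_le_sum_abs _ _
          _ ≤ ∑ j ∈ Finset.range n, (1/M) ^ j * A := by
              apply Finset.sum_le_sum
              intro i _
              rw [abs_mul, abs_pow, abs_of_nonneg hr0]
              exact mul_le_mul_of_nonneg_left (hA _) (pow_nonneg hr0 i)
          _ = (∑ j ∈ Finset.range n, (1/M) ^ j) * A := by rw [Finset.sum_mul]
          _ ≤ 2 * A := mul_le_mul_of_nonneg_right (geom_le_two hr0 hr n) hA0
      have hg0 : g 0 = 0 := by
        by_contra hne
        have := hM 0 hne
        have h2 : |g 0| = |(1/M) * S| := by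
          rw [show (1/M) * S = -g 0 by linarith, abs_neg]
        rw [abs_mul, abs_of_nonneg hr0] at h2
        have h3 : (1/M) * |S| ≤ (1/M) * (2 * A) :=
          mul_le_mul_of_nonneg_left hSb hr0
        have h4 : (1/M) * (2 * A) < |g 0| := by
          rw [div_mul_eq_mul_div, one_mul, div_lt_iff₀ hM0]
          linarith
        linarith
      have hS0 : S = 0 := by
        have : (1/M) * S = 0 := by rw [hg0] at hsum; linarith
        rcases mul_eq_zero.1 this with h | h
        · exact absurd h (by positivity)
        · exact h
      rcases j with _ | j
      · exact hg0
      · exact ih (fun j => g (j + 1)) (fun j => hA _) (fun j => hM _) hS0 j (by omega)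

/-- Corollary: with `ν♭ = Σ_{i<N} p(w̃σ)^i(μ)/M^i` as before, one has `⟨α, ν♭⟩ = 0` if and
only if `⟨α, p(w̃σ)^i(μ)⟩ = 0` for all `i ∈ ℤ`.  Here `φ` is the finite-order linear
automorphism `p(w̃σ)` of `V = Y ⊗ ℝ` acting compatibly on the roots, and `μ = ψ(η)` is a
conjugate of `η` under the group generated by `W₀` and `σ`. -/
theorem stmt_4 {V Phi : Type*} [AddCommGroup V] [Module ℝ V]
    (pair : Phi → V → ℝ) (hlin : ∀ α, IsLinearMap ℝ (pair α))
    (η : V) (A M : ℝ)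
    (hA : ∀ α : Phi, |pair α η| ≤ A)
    (hM2 : 2 ≤ M)
    (hM : ∀ α : Phi, pair α η ≠ 0 → 2 * A < M * |pair α η|)
    (φ : V ≃ₗ[ℝ] V) (permφ : Equiv.Perm Phi)
    (hφ : ∀ (α : Phi) (v : V), pair (permφ α) (φ v) = pair α v)
    (N : ℕ) (hN : 0 < N) (hord : φ ^ N = 1)
    (ψ : V ≃ₗ[ℝ] V) (permψ : Equiv.Perm Phi)
    (hψ : ∀ (α : Phi) (v : V), pair (permψ α) (ψ v) = pair α v)
    (μ : V) (hμ : μ = ψ η) (α : Phi) :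
    pair α (∑ i ∈ Finset.range N, (1 / M ^ i) • (φ ^ i) μ) = 0 ↔
      ∀ i : ℤ, pair α ((φ ^ i) μ) = 0 := by
  have hM0 : (0:ℝ) < M := by linarith
  -- step lemmas for moving φ / ψ across the pairing
  have hstepφ : ∀ (β : Phi) (v : V), pair β (φ v) = pair (permφ⁻¹ β) v := by
    intro β v
    have := hφ (permφ⁻¹ β) v
    rwa [← Equiv.Perm.mul_apply, mul_inv_cancel, Equiv.Perm.one_apply] at this
  have hstepψ : ∀ (β : Phi) (v : V), pair β (ψ v) = pair (permψ⁻¹ β) v := by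
    intro β v
    have := hψ (permψ⁻¹ β) v
    rwa [← Equiv.Perm.mul_apply, mul_inv_cancel, Equiv.Perm.one_apply] at this
  have hpow : ∀ (i : ℕ) (β : Phi) (v : V), pair β ((φ ^ i) v) = pair ((permφ⁻¹ ^ i) β) v := by
    intro i
    induction i with
    | zero => intro β v; simp
    | succ n ih =>
        intro β v
        have h1 : (φ ^ (n + 1)) v = (φ ^ n) (φ v) := by
          rw [pow_succ]; rfl
        rw [h1, ih, hstepφ, ← Equiv.Perm.mul_apply, ← pow_succ']
  -- the sequence of pairings
  set f : ℕ → ℝ := fun i => pair α ((φ ^ i) μ) with hf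
  have hfval : ∀ i, f i = pair (permψ⁻¹ ((permφ⁻¹ ^ i) α)) η := by
    intro i
    rw [hf]; simp only
    rw [hμ, hpow, hstepψ]
  have hfA : ∀ i, |f i| ≤ A := fun i => by rw [hfval]; exact hA _
  have hfM : ∀ i, f i ≠ 0 → 2 * A < M * |f i| := fun i h => by
    rw [hfval] at h ⊢; exact hM _ h
  -- rewrite the pairing of the sum
  have hL : ∀ x, pair α x = (IsLinearMap.mk' (pair α) (hlin α)) x := fun _ => rfl
  have hsum : pair α (∑ i ∈ Finset.range N, (1 / M ^ i) • (φ ^ i) μ)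
      = ∑ i ∈ Finset.range N, (1 / M) ^ i * f i := by
    rw [hL, map_sum]
    apply Finset.sum_congr rfl
    intro i _
    rw [map_smul, smul_eq_mul, ← hL, div_pow, one_pow]
  -- reduction of integer powers
  have zred : ∀ i : ℤ, φ ^ i = φ ^ (i % (N : ℤ)).toNat := by
    have hNZ : (N : ℤ) ≠ 0 := by exact_mod_cast hN.ne'
    intro i
    have hnn : 0 ≤ i % (N : ℤ) := Int.emod_nonneg i hNZ
    calc φ ^ i = φ ^ ((N : ℤ) * (i / N) + i % N) := by rw [Int.mul_ediv_add_emod]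
      _ = (φ ^ (N : ℤ)) ^ (i / (N : ℤ)) * φ ^ (i % (N : ℤ)) := by
          rw [zpow_add, zpow_mul]
      _ = φ ^ (i % (N : ℤ)) := by
          rw [show φ ^ (N : ℤ) = 1 by rw [zpow_natCast, hord], one_zpow, one_mul]
      _ = φ ^ (i % (N : ℤ)).toNat := by
          rw [← zpow_natCast, Int.toNat_of_nonneg hnn]
  rw [hsum]
  constructor
  · intro h0 i
    have hall : ∀ j < N, f j = 0 := key hM2 N f hfA hfM h0
    rw [zred i]
    have hlt : (i % (N : ℤ)).toNat < N := by
      have : i % (N : ℤ) < N := Int.emod_lt_of_pos i (by exact_mod_cast hN)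
      omega
    exact hall _ hlt
  · intro h
    apply Finset.sum_eq_zero
    intro i _
    have : f i = 0 := by
      have := h (i : ℤ)
      rwa [zpow_natCast] at this
    rw [this, mul_zero]
end

section
/- With ν♭ as above, for any z ∈ W₀ one has ν♭(z w̃ σ(z)⁻¹) = z(ν♭(w̃)), i.e. the flat Newton vector transforms by the Weyl group under σ-conjugation. -/
/-- Corollary: `ν♭(z w̃ σ(z)⁻¹) = z(ν♭(w̃))` for `z ∈ W₀`.  Here `φ = p(w̃σ)` is a
finite-order linear automorphism of `V = Y ⊗ ℝ` and `μ` is the translation part of `w̃`;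
the `σ`-conjugate `z w̃ σ(z)⁻¹` has translation part `z(μ)` and `p`-part `z φ z⁻¹`
(with `ζ` the linear action of `z`), so its flat Newton vector is
`Σ_{i<N} (ζφζ⁻¹)^i (ζμ) / M^i`. -/
theorem stmt_5 {V : Type*} [AddCommGroup V] [Module ℝ V]
    (M : ℝ) (hM2 : 2 ≤ M)
    (φ : V ≃ₗ[ℝ] V) (N : ℕ) (hN : 0 < N) (hord : φ ^ N = 1)
    (μ : V) (ζ : V ≃ₗ[ℝ] V) :
    ∑ i ∈ Finset.range N, (1 / M ^ i) • ((ζ * φ * ζ⁻¹) ^ i) (ζ μ) =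
      ζ (∑ i ∈ Finset.range N, (1 / M ^ i) • (φ ^ i) μ) := by
  rw [map_sum]
  refine Finset.sum_congr rfl fun i _ => ?_
  rw [map_smul]
  congr 1
  have h : ∀ j : ℕ, (ζ * φ * ζ⁻¹) ^ j = ζ * φ ^ j * ζ⁻¹ := by
    intro j
    induction j with
    | zero => group
    | succ n ih => rw [pow_succ, ih, pow_succ]; group
  rw [h]
  show ζ ((φ ^ i) (ζ⁻¹ (ζ μ))) = ζ ((φ ^ i) μ)
  congr 1
  congr 1
  exact ζ.symm_apply_apply μ
end
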